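/- For every valid configuration c = (z, σ, t), the optimal tree t*(c) = t ∪ reach(c) attains the best possible F1 among all trees reachable from c; that is, F1(t*(c)) = F1(c) = max over t' ∈ D(c) of F1(t'). (Theorem 1, optimality of t*.) -/

import Mathlib

/-!
Formalization of the span-based Structure/Label transition parsing system of
Cross & Huang (2016), "Span-Based Constituency Parsing with a Structure-Label
System and Provably Optimal Dynamic Oracles".

A configuration is `(z, σ, t)` where `z` is the step number, `σ` the stack of
span boundaries and `t` the set of brackets built so far.  A bracket is a
triple `(X, i, j)` with `X` a nonterminal label and `i < j ≤ n` a span.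
-/

set_option linter.unusedSectionVars false
namespace SpanParser

structure Config (N : Type*) where
  z : ℕ
  σ : List ℕ
  t : Finset (N × ℕ × ℕ)

variable {N : Type*}

/-- The span of a bracket. -/
def span (b : N × ℕ × ℕ) : ℕ × ℕ := b.2

/-- Top (rightmost) boundary of the stack. -/
def topJ (σ : List ℕ) : ℕ := σ.getLastD 0

/-- Second-to-top boundary of the stack. -/
def topI (σ : List ℕ) : ℕ := σ.dropLast.getLastD 0

/-- Parser actions: shift, combine, label-`X`, and nolabel. -/
inductive Action (N : Type*) where
  | sh : Action N
  | comb : Action N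
  | label : N → Action N
  | nolabel : Action N

variable [DecidableEq N]

/-- Applicability of an action at a configuration (for sentence length `n`). -/
def App (n : ℕ) (c : Config N) : Action N → Prop
  | .sh      => Even c.z ∧ c.σ ≠ [] ∧ topJ c.σ < n
  | .comb    => Even c.z ∧ 3 ≤ c.σ.length
  | .label _ => Odd c.z ∧ 2 ≤ c.σ.length
  | .nolabel => Odd c.z ∧ 2 ≤ c.σ.length ∧ c.z < 4 * n - 1

/-- The result `τ(c)` of applying action `τ` to configuration `c`. -/
def doAct (c : Config N) : Action N → Config N
  | .sh      => ⟨c.z + 1, c.σ ++ [topJ c.σ + 1], c.t⟩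
  | .comb    => ⟨c.z + 1, c.σ.dropLast.dropLast ++ [topJ c.σ], c.t⟩
  | .label X => ⟨c.z + 1, c.σ, insert (X, topI c.σ, topJ c.σ) c.t⟩
  | .nolabel => ⟨c.z + 1, c.σ, c.t⟩

/-- The initial configuration `(0, [0], ∅)`. -/
def initial (N : Type*) : Config N := ⟨0, [0], ∅⟩

/-- One transition step `c ⊢ c'`. -/
def Step (n : ℕ) (c c' : Config N) : Prop := ∃ a, App n c a ∧ c' = doAct c a

/-- `⊢*`: reflexive-transitive closure of the transition relation. -/
def Reaches (n : ℕ) : Config N → Config N → Prop := Relation.ReflTransGen (Step n)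

/-- A configuration is valid if it is reachable from the initial configuration. -/
def Valid (n : ℕ) (c : Config N) : Prop := Reaches n (initial N) c

/-- A final configuration: `σ = [0, n]` and `z = 4n - 2`. -/
def Final (n : ℕ) (c : Config N) : Prop := c.σ = [0, n] ∧ c.z = 4 * n - 2

/-- `D(c)`: the set of trees of final configurations reachable from `c`. -/
def Dset (n : ℕ) (c : Config N) : Set (Finset (N × ℕ × ℕ)) :=
  {t' | ∃ c', Reaches n c c' ∧ Final n c' ∧ c'.t = t'}

/-- `(i,j) ⪯ (p,q)`: span `(i,j)` is encompassed by `(p,q)`, i.e. `p ≤ i < j ≤ q`. -/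
def Enc (s₁ s₂ : ℕ × ℕ) : Prop := s₂.1 ≤ s₁.1 ∧ s₁.1 < s₁.2 ∧ s₁.2 ≤ s₂.2

/-- `(i,j) ≺ (p,q)`: strict encompassment. -/
def SEnc (s₁ s₂ : ℕ × ℕ) : Prop := Enc s₁ s₂ ∧ s₁ ≠ s₂

/-- `tG` is a gold tree for sentence length `n`: valid spans, pairwise-distinct
spans, pairwise non-crossing spans, and exactly one bracket with span `(0, n)`
(uniqueness follows from distinctness of spans). -/
structure IsGold (n : ℕ) (tG : Finset (N × ℕ × ℕ)) : Prop where
  validSpans : ∀ b ∈ tG, (span b).1 < (span b).2 ∧ (span b).2 ≤ n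
  distinctSpans : ∀ b₁ ∈ tG, ∀ b₂ ∈ tG, span b₁ = span b₂ → b₁ = b₂
  noncrossing : ∀ b₁ ∈ tG, ∀ b₂ ∈ tG,
    Enc (span b₁) (span b₂) ∨ Enc (span b₂) (span b₁) ∨
    (span b₁).2 ≤ (span b₂).1 ∨ (span b₂).2 ≤ (span b₁).1
  root : ∃ X, (X, 0, n) ∈ tG

open Classical in
/-- `left(c)`: gold brackets (strictly, at even steps) encompassing the top
span whose left boundary occurs on the stack. -/
noncomputable def leftSet (tG : Finset (N × ℕ × ℕ)) (c : Config N) :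
    Finset (N × ℕ × ℕ) :=
  tG.filter fun b =>
    (if Even c.z then SEnc (topI c.σ, topJ c.σ) (span b)
     else Enc (topI c.σ, topJ c.σ) (span b)) ∧ (span b).1 ∈ c.σ

open Classical in
/-- `right(c)`: gold brackets entirely on the queue. -/
noncomputable def rightSet (tG : Finset (N × ℕ × ℕ)) (c : Config N) :
    Finset (N × ℕ × ℕ) :=
  tG.filter fun b => topJ c.σ ≤ (span b).1

open Classical in
/-- `reach(c)`: the reachable gold brackets (all of `t_G` at the initial
configuration, whose stack has fewer than two boundaries). -/
noncomputable def reach (tG : Finset (N × ℕ × ℕ)) (c : Config N) :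
    Finset (N × ℕ × ℕ) :=
  if c.σ.length < 2 then tG else leftSet tG c ∪ rightSet tG c

/-- The optimal tree `t*(c) = t ∪ reach(c)`. -/
noncomputable def tstar (tG : Finset (N × ℕ × ℕ)) (c : Config N) :
    Finset (N × ℕ × ℕ) :=
  c.t ∪ reach tG c

/-- `b = next(c)`: the `≺`-minimal element of `left(c)`. -/
def IsNext (tG : Finset (N × ℕ × ℕ)) (c : Config N) (b : N × ℕ × ℕ) : Prop :=
  b ∈ leftSet tG c ∧ ∀ b' ∈ leftSet tG c, Enc (span b) (span b')

/-- The dynamic-oracle policy `dyna(c)` as a predicate on actions. -/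
def Dyna (tG : Finset (N × ℕ × ℕ)) (c : Config N) (a : Action N) : Prop :=
  if c.σ.length < 2 then a = Action.sh
  else if Even c.z then
    ∃ b, IsNext tG c b ∧
      (((span b).1 = topI c.σ ∧ topJ c.σ < (span b).2 ∧ a = Action.sh) ∨
       ((span b).1 < topI c.σ ∧ (span b).2 = topJ c.σ ∧ a = Action.comb) ∨
       ((span b).1 < topI c.σ ∧ topJ c.σ < (span b).2 ∧
          (a = Action.sh ∨ a = Action.comb)))
  else
    (∃ X, (X, topI c.σ, topJ c.σ) ∈ tG ∧ a = Action.label X) ∨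
    ((∀ X, (X, topI c.σ, topJ c.σ) ∉ tG) ∧ a = Action.nolabel)

/-- `F1` of a predicted bracket set `t'` against the gold tree `tG`
(`0` when `t' ∩ tG = ∅`). -/
noncomputable def f1 (tG t' : Finset (N × ℕ × ℕ)) : ℝ :=
  if t' ∩ tG = ∅ then 0
  else
    (2 * (((t' ∩ tG).card : ℝ) / (tG.card : ℝ)) * (((t' ∩ tG).card : ℝ) / (t'.card : ℝ))) /
      ((((t' ∩ tG).card : ℝ) / (tG.card : ℝ)) + (((t' ∩ tG).card : ℝ) / (t'.card : ℝ)))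

/-- `F1(c)`: the best `F1` among trees reachable from `c`. -/
noncomputable def configF1 (n : ℕ) (tG : Finset (N × ℕ × ℕ)) (c : Config N) : ℝ :=
  sSup (f1 tG '' Dset n c)

/-- A run of (applicable) actions from one configuration to another. -/
inductive Run (n : ℕ) : Config N → List (Action N) → Config N → Prop
  | refl (c : Config N) : Run n c [] c
  | step {c c' : Config N} {as : List (Action N)} (a : Action N)
      (happ : App n c a) (h : Run n (doAct c a) as c') : Run n c (a :: as) c'

/-- A run all of whose actions follow the dynamic oracle. -/
inductive DynaRun (n : ℕ) (tG : Finset (N × ℕ × ℕ)) : Config N → Config N → Prop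
  | refl (c : Config N) : DynaRun n tG c c
  | step {c c' : Config N} (a : Action N) (happ : App n c a) (hdyna : Dyna tG c a)
      (h : DynaRun n tG (doAct c a) c') : DynaRun n tG c c'

def isSh : Action N → Bool
  | .sh => true
  | _ => false

def isComb : Action N → Bool
  | .comb => true
  | _ => false

/-- Label-step actions: `label-X` or `nolabel`. -/
def isLabelStep : Action N → Bool
  | .label _ => true
  | .nolabel => true
  | _ => false



/-! ### Stack lemmas -/

lemma dropLast_concat_topJ {l : List ℕ} (h : l ≠ []) : l.dropLast ++ [topJ l] = l := by
  rw [topJ, List.getLastD_eq_getLast?, List.getLast?_eq_getLast h]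
  simp [List.dropLast_append_getLast]

lemma topJ_concat (l : List ℕ) (x : ℕ) : topJ (l ++ [x]) = x := by simp [topJ]

lemma topI_concat (l : List ℕ) (x : ℕ) : topI (l ++ [x]) = topJ l := by
  simp [topI, topJ]

lemma topJ_mem {l : List ℕ} (h : l ≠ []) : topJ l ∈ l := by
  have h2 : topJ l ∈ l.dropLast ++ [topJ l] := List.mem_append_right _ (by simp)
  rwa [dropLast_concat_topJ h] at h2

lemma mem_le_topJ {l : List ℕ} (hp : l.Pairwise (· < ·)) {p : ℕ} (h : p ∈ l) :
    p ≤ topJ l := by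
  rcases eq_or_ne l [] with rfl | hne
  · simp at h
  · conv at h => rw [← dropLast_concat_topJ hne]
    rw [← dropLast_concat_topJ hne, List.pairwise_append] at hp
    rcases List.mem_append.1 h with h' | h'
    · exact le_of_lt (hp.2.2 p h' _ (by simp))
    · simp at h'; omega

lemma mem_dropLast_lt {l : List ℕ} (hp : l.Pairwise (· < ·)) {p : ℕ}
    (h : p ∈ l.dropLast) (hne : l ≠ []) : p < topJ l := by
  rw [← dropLast_concat_topJ hne, List.pairwise_append] at hp
  exact hp.2.2 p h _ (by simp)

lemma topI_mem {l : List ℕ} (h : 2 ≤ l.length) : topI l ∈ l := by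
  have hne : l.dropLast ≠ [] := by
    intro he; have := congrArg List.length he; simp [List.length_dropLast] at this; omega
  have : topI l ∈ l.dropLast := topJ_mem hne
  exact List.dropLast_subset l this

lemma topI_lt_topJ {l : List ℕ} (hp : l.Pairwise (· < ·)) (h : 2 ≤ l.length) :
    topI l < topJ l := by
  have hne : l.dropLast ≠ [] := by
    intro he; have := congrArg List.length he; simp [List.length_dropLast] at this; omega
  have hne' : l ≠ [] := by intro he; subst he; simp at h
  exact mem_dropLast_lt hp (topJ_mem hne) hne'

lemma mem_le_topI {l : List ℕ} (hp : l.Pairwise (· < ·)) {p : ℕ} (h : p ∈ l)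
    (hlt : p < topJ l) : p ≤ topI l := by
  have hne : l ≠ [] := by intro he; subst he; simp at h
  conv at h => rw [← dropLast_concat_topJ hne]
  rcases List.mem_append.1 h with h' | h'
  · exact mem_le_topJ (hp.sublist (List.dropLast_sublist l)) h'
  · simp at h'; omega

lemma head?_some_of_len_one {l : List ℕ} (h : l.length = 1) (h0 : l.head? = some 0) :
    l = [0] := by
  match l, h with
  | [a], _ => simp_all

lemma eq_pair_of_len_two {l : List ℕ} (h : l.length = 2) (h0 : l.head? = some 0) :
    l = [0, topJ l] := by
  match l, h with
  | [a, b], _ => simp at h0 ⊢; constructor; omega; simp [topJ]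

/-! ### The invariant of valid configurations -/

def Inv (n : ℕ) (c : Config N) : Prop :=
  c.σ ≠ [] ∧ c.σ.head? = some 0 ∧ c.σ.Pairwise (· < ·) ∧ (∀ x ∈ c.σ, x ≤ n) ∧
  c.z + (if Even c.z then 0 else 1) + 2 * c.σ.length = 4 * topJ c.σ + 2 ∧
  (¬ Even c.z → 2 ≤ c.σ.length)

lemma inv_initial (n : ℕ) : Inv n (initial N) := by
  refine ⟨by simp [initial], by simp [initial], by simp [initial],
    by simp [initial], ?_, ?_⟩ <;> simp [initial, topJ]

lemma head?_concat_of_ne_nil {l : List ℕ} (h : l ≠ []) (x : ℕ) :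
    (l ++ [x]).head? = l.head? := by
  cases l with
  | nil => simp at h
  | cons a t => simp

lemma head?_dropLast {l : List ℕ} (h : 2 ≤ l.length) : l.dropLast.head? = l.head? := by
  match l, h with
  | a :: b :: t, _ => rw [List.dropLast_cons₂]; simp

lemma inv_doAct {n : ℕ} {c : Config N} {a : Action N} (hInv : Inv n c)
    (happ : App n c a) : Inv n (doAct c a) := by
  obtain ⟨hne, hhead, hsort, hle, hz, hodd⟩ := hInv
  cases a with
  | sh =>
    obtain ⟨hev, -, hj⟩ := happ
    have hmemj : ∀ x ∈ c.σ, x < topJ c.σ + 1 :=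
      fun x hx => Nat.lt_succ_of_le (mem_le_topJ hsort hx)
    refine ⟨by simp [doAct], ?_, ?_, ?_, ?_, ?_⟩
    · simpa [doAct, head?_concat_of_ne_nil hne] using hhead
    · simp only [doAct]
      rw [List.pairwise_append]
      exact ⟨hsort, List.pairwise_singleton _ _, by simpa using hmemj⟩
    · simp only [doAct]
      intro x hx
      rcases List.mem_append.1 hx with h | h
      · exact hle x h
      · simp at h; omega
    · simp only [doAct, topJ_concat, List.length_append, List.length_singleton]
      simp only [show ¬Even (c.z+1) by simp [Nat.even_add_one, hev], ↓reduceIte]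
      rw [if_pos hev] at hz
      omega
    · intro _
      simp only [doAct, List.length_append, List.length_singleton]
      have : 1 ≤ c.σ.length := List.length_pos_iff.2 hne
      omega
  | comb =>
    obtain ⟨hev, hlen⟩ := happ
    have hddne : c.σ.dropLast.dropLast ≠ [] := by
      intro he; have := congrArg List.length he; simp at this; omega
    have hdne : c.σ.dropLast ≠ [] := by
      intro he; have := congrArg List.length he; simp at this; omega
    have hsub : ∀ x ∈ c.σ.dropLast.dropLast, x ∈ c.σ := by
      intro x hx
      exact List.dropLast_subset _ (List.dropLast_subset _ hx)
    have hlt : ∀ x ∈ c.σ.dropLast.dropLast, x < topJ c.σ := by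
      intro x hx
      exact mem_dropLast_lt hsort (List.dropLast_subset _ hx) hne
    refine ⟨by simp [doAct], ?_, ?_, ?_, ?_, ?_⟩
    · simp only [doAct]
      rw [head?_concat_of_ne_nil hddne]
      rw [head?_dropLast (by simp; omega), head?_dropLast (by omega)]
      exact hhead
    · simp only [doAct]
      rw [List.pairwise_append]
      refine ⟨(hsort.sublist (List.dropLast_sublist _)).sublist (List.dropLast_sublist _),
        List.pairwise_singleton _ _, by simpa using hlt⟩
    · simp only [doAct]
      intro x hx
      rcases List.mem_append.1 hx with h | h
      · exact hle x (hsub x h)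
      · simp at h; subst h; exact hle _ (topJ_mem hne)
    · simp only [doAct, topJ_concat, List.length_append, List.length_singleton,
        List.length_dropLast]
      simp only [show ¬Even (c.z+1) by simp [Nat.even_add_one, hev], ↓reduceIte]
      rw [if_pos hev] at hz
      omega
    · intro _
      simp only [doAct, List.length_append, List.length_singleton, List.length_dropLast]
      omega
  | label X =>
    obtain ⟨hodd', hlen⟩ := happ
    have hnev : ¬ Even c.z := Nat.not_even_iff_odd.2 hodd'
    refine ⟨hne, hhead, hsort, hle, ?_, ?_⟩
    · simp only [doAct]
      simp only [show Even (c.z+1) by simp [Nat.even_add_one, hnev], ↓reduceIte]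
      rw [if_neg hnev] at hz
      omega
    · intro h; exact absurd (by simp [Nat.even_add_one, hnev] : Even (c.z+1)) h
  | nolabel =>
    obtain ⟨hodd', hlen, -⟩ := happ
    have hnev : ¬ Even c.z := Nat.not_even_iff_odd.2 hodd'
    refine ⟨hne, hhead, hsort, hle, ?_, ?_⟩
    · simp only [doAct]
      simp only [show Even (c.z+1) by simp [Nat.even_add_one, hnev], ↓reduceIte]
      rw [if_neg hnev] at hz
      omega
    · intro h; exact absurd (by simp [Nat.even_add_one, hnev] : Even (c.z+1)) h

/-! ### Reach lemmas -/

lemma reach_subset_gold (tG : Finset (N × ℕ × ℕ)) (c : Config N) : reach tG c ⊆ tG := by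
  intro b hb
  rw [reach] at hb
  split at hb
  · exact hb
  · rcases Finset.mem_union.1 hb with h | h
    · simp only [leftSet, Finset.mem_filter] at h; exact h.1
    · simp only [rightSet, Finset.mem_filter] at h; exact h.1

lemma sh_stack (c : Config N) : (doAct c .sh).σ = c.σ ++ [topJ c.σ + 1] := rfl
lemma comb_stack (c : Config N) :
    (doAct c .comb).σ = c.σ.dropLast.dropLast ++ [topJ c.σ] := rfl

lemma mem_leftSet {tG : Finset (N × ℕ × ℕ)} {c : Config N} {X : N} {p q : ℕ} :
    (X, p, q) ∈ leftSet tG c ↔ (X, p, q) ∈ tG ∧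
      (if Even c.z then SEnc (topI c.σ, topJ c.σ) (p, q)
       else Enc (topI c.σ, topJ c.σ) (p, q)) ∧ p ∈ c.σ := by
  simp only [leftSet, Finset.mem_filter]; exact Iff.rfl

lemma mem_rightSet {tG : Finset (N × ℕ × ℕ)} {c : Config N} {X : N} {p q : ℕ} :
    (X, p, q) ∈ rightSet tG c ↔ (X, p, q) ∈ tG ∧ topJ c.σ ≤ p := by
  simp only [rightSet, Finset.mem_filter]; exact Iff.rfl

lemma enc_iff {i j p q : ℕ} : Enc (i, j) (p, q) ↔ p ≤ i ∧ i < j ∧ j ≤ q := Iff.rfl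

lemma senc_iff {i j p q : ℕ} :
    SEnc (i, j) (p, q) ↔ (p ≤ i ∧ i < j ∧ j ≤ q) ∧ ¬(i = p ∧ j = q) := by
  unfold SEnc Enc
  simp [Prod.ext_iff]

lemma reach_doAct_subset {n : ℕ} (tG : Finset (N × ℕ × ℕ)) {c : Config N} {a : Action N}
    (hInv : Inv n c) (happ : App n c a) :
    reach tG (doAct c a) ⊆ reach tG c := by
  obtain ⟨hne, hhead, hsort, hle, hz, hoddlen⟩ := hInv
  intro b hb
  have hbG : b ∈ tG := reach_subset_gold tG _ hb
  obtain ⟨X, p, q⟩ := b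
  cases a with
  | sh =>
    obtain ⟨hev, -, hj⟩ := happ
    by_cases hlen : c.σ.length < 2
    · rw [reach, if_pos hlen]; exact hbG
    · push_neg at hlen
      have htJ : topJ (doAct c .sh).σ = topJ c.σ + 1 := topJ_concat _ _
      have htI : topI (doAct c .sh).σ = topJ c.σ := topI_concat _ _
      rw [reach, if_neg (by rw [sh_stack]; simp; omega)] at hb
      rw [reach, if_neg (by omega)]
      rcases Finset.mem_union.1 hb with hb | hb
      · rw [mem_leftSet, htI, htJ, if_neg (by simp [doAct, Nat.even_add_one, hev])] at hb
        obtain ⟨-, henc, hpmem⟩ := hb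
        rw [enc_iff] at henc
        obtain ⟨hp, -, hq⟩ := henc
        rw [sh_stack] at hpmem
        have hpσ : p ∈ c.σ := by
          rcases List.mem_append.1 hpmem with h | h
          · exact h
          · simp at h; omega
        rcases eq_or_lt_of_le hp with heq | hlt
        · exact Finset.mem_union_right _ (mem_rightSet.2 ⟨hbG, le_of_eq heq.symm⟩)
        · refine Finset.mem_union_left _ ?_
          rw [mem_leftSet, if_pos hev, senc_iff]
          exact ⟨hbG, ⟨⟨mem_le_topI hsort hpσ hlt, topI_lt_topJ hsort hlen, by omega⟩,
            fun hcon => by omega⟩, hpσ⟩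
      · rw [mem_rightSet, htJ] at hb
        exact Finset.mem_union_right _ (mem_rightSet.2 ⟨hbG, by omega⟩)
  | comb =>
    obtain ⟨hev, hlen3⟩ := happ
    have hddne : c.σ.dropLast.dropLast ≠ [] := by
      intro he; have := congrArg List.length he; simp at this; omega
    have hdne : c.σ.dropLast ≠ [] := by
      intro he; have := congrArg List.length he; simp at this; omega
    have htJ : topJ (doAct c .comb).σ = topJ c.σ := topJ_concat _ _
    have htI : topI (doAct c .comb).σ = topJ c.σ.dropLast.dropLast := topI_concat _ _
    have hHlt : topJ c.σ.dropLast.dropLast < topI c.σ :=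
      mem_dropLast_lt (hsort.sublist (List.dropLast_sublist _)) (topJ_mem hddne) hdne
    have hIJ : topI c.σ < topJ c.σ := topI_lt_topJ hsort (by omega)
    rw [reach, if_neg (by rw [comb_stack]; simp; omega)] at hb
    rw [reach, if_neg (by omega)]
    rcases Finset.mem_union.1 hb with hb | hb
    · rw [mem_leftSet, htI, htJ, if_neg (by simp [doAct, Nat.even_add_one, hev])] at hb
      obtain ⟨-, henc, hpmem⟩ := hb
      rw [enc_iff] at henc
      obtain ⟨hp, -, hq⟩ := henc
      have hplt : p < topI c.σ := lt_of_le_of_lt hp hHlt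
      rw [comb_stack] at hpmem
      have hpσ : p ∈ c.σ := by
        rcases List.mem_append.1 hpmem with h | h
        · exact List.dropLast_subset _ (List.dropLast_subset _ h)
        · simp at h; omega
      refine Finset.mem_union_left _ ?_
      rw [mem_leftSet, if_pos hev, senc_iff]
      exact ⟨hbG, ⟨⟨le_of_lt hplt, hIJ, hq⟩, fun hcon => by omega⟩, hpσ⟩
    · rw [mem_rightSet, htJ] at hb
      exact Finset.mem_union_right _ (mem_rightSet.2 ⟨hbG, hb.2⟩)
  | label X' =>
    obtain ⟨hodd', hlen⟩ := happ
    have hnev : ¬ Even c.z := Nat.not_even_iff_odd.2 hodd'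
    rw [reach, if_neg (by simp [doAct]; omega)] at hb
    rw [reach, if_neg (by omega)]
    rcases Finset.mem_union.1 hb with hb | hb
    · rw [mem_leftSet, if_pos (by simp [doAct, Nat.even_add_one, hnev])] at hb
      refine Finset.mem_union_left _ ?_
      rw [mem_leftSet, if_neg hnev]
      exact ⟨hbG, hb.2.1.1, hb.2.2⟩
    · rw [mem_rightSet] at hb
      exact Finset.mem_union_right _ (mem_rightSet.2 ⟨hbG, hb.2⟩)
  | nolabel =>
    obtain ⟨hodd', hlen, -⟩ := happ
    have hnev : ¬ Even c.z := Nat.not_even_iff_odd.2 hodd'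
    rw [reach, if_neg (by simp [doAct]; omega)] at hb
    rw [reach, if_neg (by omega)]
    rcases Finset.mem_union.1 hb with hb | hb
    · rw [mem_leftSet, if_pos (by simp [doAct, Nat.even_add_one, hnev])] at hb
      refine Finset.mem_union_left _ ?_
      rw [mem_leftSet, if_neg hnev]
      exact ⟨hbG, hb.2.1.1, hb.2.2⟩
    · rw [mem_rightSet] at hb
      exact Finset.mem_union_right _ (mem_rightSet.2 ⟨hbG, hb.2⟩)

lemma top_mem_reach {n : ℕ} (tG : Finset (N × ℕ × ℕ)) {c : Config N} {X : N}
    (hInv : Inv n c) (hodd : ¬ Even c.z) (hlen : 2 ≤ c.σ.length)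
    (hb : (X, topI c.σ, topJ c.σ) ∈ tG) : (X, topI c.σ, topJ c.σ) ∈ reach tG c := by
  obtain ⟨hne, hhead, hsort, hle, hz, -⟩ := hInv
  rw [reach, if_neg (by omega)]
  refine Finset.mem_union_left _ ?_
  rw [mem_leftSet, if_neg hodd]
  exact ⟨hb, ⟨le_refl _, topI_lt_topJ hsort hlen, le_refl _⟩, topI_mem hlen⟩

lemma doAct_t_subset (c : Config N) (a : Action N) : c.t ⊆ (doAct c a).t := by
  cases a <;> simp [doAct, Finset.subset_insert]

lemma doAct_decreasing {n : ℕ} (tG : Finset (N × ℕ × ℕ)) {c : Config N} {a : Action N}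
    (hInv : Inv n c) (happ : App n c a) :
    ((doAct c a).t ∩ tG) ∪ reach tG (doAct c a) ⊆ (c.t ∩ tG) ∪ reach tG c := by
  refine Finset.union_subset ?_
    ((reach_doAct_subset tG hInv happ).trans Finset.subset_union_right)
  cases a with
  | label X =>
    intro b hb
    rw [Finset.mem_inter] at hb
    obtain ⟨hbt, hbG⟩ := hb
    simp only [doAct, Finset.mem_insert] at hbt
    rcases hbt with rfl | hbt
    · exact Finset.mem_union_right _
        (top_mem_reach tG hInv (Nat.not_even_iff_odd.2 happ.1) happ.2 hbG)
    · exact Finset.mem_union_left _ (Finset.mem_inter.2 ⟨hbt, hbG⟩)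
  | sh => exact fun b hb => Finset.mem_union_left _ hb
  | comb => exact fun b hb => Finset.mem_union_left _ hb
  | nolabel => exact fun b hb => Finset.mem_union_left _ hb

lemma reaches_inv {n : ℕ} {c c' : Config N} (hInv : Inv n c) (h : Reaches n c c') :
    Inv n c' := by
  induction h with
  | refl => exact hInv
  | tail _ hstep ih =>
    obtain ⟨a, happ, rfl⟩ := hstep
    exact inv_doAct ih happ

lemma reaches_t_subset {n : ℕ} {c c' : Config N} (h : Reaches n c c') : c.t ⊆ c'.t := by
  induction h with
  | refl => exact Finset.Subset.refl _
  | tail _ hstep ih =>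
    obtain ⟨a, happ, rfl⟩ := hstep
    exact ih.trans (doAct_t_subset _ a)

lemma reaches_decreasing {n : ℕ} (tG : Finset (N × ℕ × ℕ)) {c c' : Config N}
    (hInv : Inv n c) (h : Reaches n c c') :
    (c'.t ∩ tG) ∪ reach tG c' ⊆ (c.t ∩ tG) ∪ reach tG c := by
  induction h with
  | refl => exact Finset.Subset.refl _
  | @tail b c' hreach hstep ih =>
    obtain ⟨a, happ, rfl⟩ := hstep
    exact (doAct_decreasing tG (reaches_inv hInv hreach) happ).trans ih

lemma valid_inv {n : ℕ} {c : Config N} (hc : Valid n c) : Inv n c :=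
  reaches_inv (inv_initial n) hc

lemma mem_dropLast_of_lt {l : List ℕ} {p : ℕ} (h : p ∈ l) (hlt : p < topJ l) :
    p ∈ l.dropLast := by
  have hne : l ≠ [] := by rintro rfl; simp at h
  conv at h => rw [← dropLast_concat_topJ hne]
  rcases List.mem_append.1 h with h' | h'
  · exact h'
  · simp at h'; omega

lemma z_lt_of_inv {n : ℕ} {c : Config N} (hn : 1 ≤ n) (hInv : Inv n c) :
    c.z < 4 * n := by
  obtain ⟨hne, hhead, hsort, hle, hz, hoddlen⟩ := hInv
  have hj : topJ c.σ ≤ n := hle _ (topJ_mem hne)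
  by_cases hev : Even c.z
  · rw [if_pos hev] at hz
    rcases Nat.lt_or_ge c.σ.length 2 with h | h
    · have h1 : c.σ.length = 1 := by have := List.length_pos_iff.2 hne; omega
      have h0 := head?_some_of_len_one h1 hhead
      rw [h0] at hz
      simp [topJ] at hz
      omega
    · omega
  · rw [if_neg hev] at hz
    have := hoddlen hev
    omega

lemma final_of {n : ℕ} {c : Config N} (hn : 1 ≤ n) (hInv : Inv n c) (hev : Even c.z)
    (hlen : c.σ.length = 2) (hj : topJ c.σ = n) : Final n c := by
  obtain ⟨hne, hhead, hsort, hle, hz, hoddlen⟩ := hInv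
  have hσ := eq_pair_of_len_two hlen hhead
  rw [hj] at hσ
  rw [if_pos hev, hlen] at hz
  exact ⟨hσ, by omega⟩

lemma reach_final_empty {n : ℕ} {tG : Finset (N × ℕ × ℕ)} (hG : IsGold n tG)
    {c : Config N} (hInv : Inv n c) (hev : Even c.z)
    (hlen : c.σ.length = 2) (hj : topJ c.σ = n) : reach tG c = ∅ := by
  obtain ⟨hne, hhead, hsort, hle, hz, hoddlen⟩ := hInv
  have hσ := eq_pair_of_len_two hlen hhead
  rw [hj] at hσ
  have htI : topI c.σ = 0 := by rw [hσ]; simp [topI, topJ]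
  rw [Finset.eq_empty_iff_forall_notMem]
  intro b hb
  obtain ⟨X, p, q⟩ := b
  have hbG := reach_subset_gold tG c hb
  have hv := hG.validSpans _ hbG
  simp only [span] at hv
  rw [reach, if_neg (by omega)] at hb
  rcases Finset.mem_union.1 hb with hb | hb
  · rw [mem_leftSet, htI, hj, if_pos hev, senc_iff] at hb
    obtain ⟨-, ⟨⟨h1, h2, h3⟩, h4⟩, -⟩ := hb
    exact h4 (by omega)
  · rw [mem_rightSet, hj] at hb
    omega

lemma oracle_run {n : ℕ} (hn : 1 ≤ n) (tG : Finset (N × ℕ × ℕ)) (hG : IsGold n tG) :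
    ∀ (fuel : ℕ) (c : Config N), Inv n c → 4 * n ≤ c.z + fuel →
    ∃ c', Reaches n c c' ∧ Final n c' ∧ c'.t = c.t ∪ reach tG c := by
  intro fuel
  induction fuel with
  | zero =>
    intro c hInv hfuel
    exact absurd (z_lt_of_inv hn hInv) (by omega)
  | succ fuel ih =>
    intro c hInv hfuel
    -- common combinator: do action `a`, provided the two inclusions hold
    have combinator : ∀ a : Action N, App n c a →
        (doAct c a).t ⊆ c.t ∪ reach tG c →
        reach tG c ⊆ (doAct c a).t ∪ reach tG (doAct c a) →
        ∃ c', Reaches n c c' ∧ Final n c' ∧ c'.t = c.t ∪ reach tG c := by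
      intro a happ hT1 hkey
      obtain ⟨c', hr, hfin, ht⟩ := ih (doAct c a) (inv_doAct hInv happ)
        (by have : (doAct c a).z = c.z + 1 := by cases a <;> rfl
            omega)
      refine ⟨c', Relation.ReflTransGen.head ⟨a, happ, rfl⟩ hr, hfin, ?_⟩
      rw [ht]
      apply Finset.Subset.antisymm
      · exact Finset.union_subset hT1
          ((reach_doAct_subset tG hInv happ).trans Finset.subset_union_right)
      · exact Finset.union_subset
          (Finset.Subset.trans (doAct_t_subset c a) Finset.subset_union_left) hkey
    obtain ⟨hne, hhead, hsort, hle, hz, hoddlen⟩ := hInv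
    have hjn : topJ c.σ ≤ n := hle _ (topJ_mem hne)
    by_cases hev : Even c.z
    · -- structural step
      rcases Nat.lt_or_ge c.σ.length 2 with hlen | hlen
      · -- stack is [0]: shift
        have h1 : c.σ.length = 1 := by have := List.length_pos_iff.2 hne; omega
        have h0 := head?_some_of_len_one h1 hhead
        have hj0 : topJ c.σ = 0 := by rw [h0]; simp [topJ]
        have happ : App n c .sh := ⟨hev, hne, by omega⟩
        refine combinator .sh happ (fun b hb => Finset.mem_union_left _ hb) ?_
        intro b hb
        have hbG : b ∈ tG := reach_subset_gold tG c hb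
        obtain ⟨X, p, q⟩ := b
        have hv := hG.validSpans _ hbG
        simp only [span] at hv
        refine Finset.mem_union_right _ ?_
        have htJ : topJ (doAct c .sh).σ = topJ c.σ + 1 := topJ_concat _ _
        have htI : topI (doAct c .sh).σ = topJ c.σ := topI_concat _ _
        rw [reach, if_neg (by rw [sh_stack]; simp; omega)]
        rcases Nat.eq_zero_or_pos p with rfl | hp
        · refine Finset.mem_union_left _ ?_
          rw [mem_leftSet, htI, htJ, hj0,
            if_neg (by simp [doAct, Nat.even_add_one, hev])]
          refine ⟨hbG, ⟨by omega, by omega, by omega⟩, ?_⟩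
          rw [sh_stack, h0]; simp
        · refine Finset.mem_union_right _ ?_
          rw [mem_rightSet, htJ, hj0]
          exact ⟨hbG, by omega⟩
      · by_cases hfin : c.σ.length = 2 ∧ topJ c.σ = n
        · -- final configuration
          refine ⟨c, Relation.ReflTransGen.refl,
            final_of hn ⟨hne, hhead, hsort, hle, hz, hoddlen⟩ hev hfin.1 hfin.2, ?_⟩
          rw [reach_final_empty hG ⟨hne, hhead, hsort, hle, hz, hoddlen⟩ hev hfin.1 hfin.2]
          simp
        · have hIJ : topI c.σ < topJ c.σ := topI_lt_topJ hsort hlen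
          by_cases hC : ∃ b ∈ tG, (span b).2 = topJ c.σ ∧ (span b).1 < topI c.σ ∧
              (span b).1 ∈ c.σ
          · -- combine
            obtain ⟨w, hwG, hw2, hw1, hw1mem⟩ := hC
            have hlen3 : 3 ≤ c.σ.length := by
              by_contra h
              have h2 : c.σ.length = 2 := by omega
              have hσ := eq_pair_of_len_two h2 hhead
              have : topI c.σ = 0 := by rw [hσ]; simp [topI, topJ]
              omega
            have happ : App n c .comb := ⟨hev, hlen3⟩
            refine combinator .comb happ (fun b hb => Finset.mem_union_left _ hb) ?_
            have hddne : c.σ.dropLast.dropLast ≠ [] := by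
              intro he; have := congrArg List.length he; simp at this; omega
            have hdne : c.σ.dropLast ≠ [] := by
              intro he; have := congrArg List.length he; simp at this; omega
            have htJ : topJ (doAct c .comb).σ = topJ c.σ := topJ_concat _ _
            have htI : topI (doAct c .comb).σ = topJ c.σ.dropLast.dropLast :=
              topI_concat _ _
            have hHlt : topJ c.σ.dropLast.dropLast < topI c.σ :=
              mem_dropLast_lt (hsort.sublist (List.dropLast_sublist _))
                (topJ_mem hddne) hdne
            intro b hb
            have hbG : b ∈ tG := reach_subset_gold tG c hb
            obtain ⟨X, p, q⟩ := b
            rw [reach, if_neg (by omega)] at hb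
            refine Finset.mem_union_right _ ?_
            rw [reach, if_neg (by rw [comb_stack]; simp; omega)]
            rcases Finset.mem_union.1 hb with hb | hb
            · rw [mem_leftSet, if_pos hev, senc_iff] at hb
              obtain ⟨-, ⟨⟨hp, -, hq⟩, hne'⟩, hpmem⟩ := hb
              have hplt : p < topI c.σ := by
                rcases eq_or_lt_of_le hp with rfl | h
                · -- p = topI: q > topJ, crossing with witness
                  exfalso
                  have hq' : topJ c.σ < q := by
                    rcases eq_or_lt_of_le hq with rfl | h'
                    · exact absurd ⟨rfl, rfl⟩ hne'
                    · exact h'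
                  obtain ⟨Y, w1, w2⟩ := w
                  simp only [span] at hw1 hw2
                  rcases hG.noncrossing _ hbG _ hwG with h | h | h | h <;>
                    (simp only [span, Enc] at h; omega)
                · exact h
              have hpd : p ∈ c.σ.dropLast := mem_dropLast_of_lt hpmem (by omega)
              have hpd2 : p ≤ topJ c.σ.dropLast.dropLast :=
                mem_le_topI (hsort.sublist (List.dropLast_sublist _)) hpd hplt
              have hpdd : p ∈ c.σ.dropLast.dropLast :=
                mem_dropLast_of_lt hpd hplt
              refine Finset.mem_union_left _ ?_
              rw [mem_leftSet, htI, htJ,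
                if_neg (by simp [doAct, Nat.even_add_one, hev])]
              refine ⟨hbG, ⟨hpd2, by omega, hq⟩, ?_⟩
              rw [comb_stack]
              exact List.mem_append_left _ hpdd
            · rw [mem_rightSet] at hb
              refine Finset.mem_union_right _ ?_
              rw [mem_rightSet, htJ]
              exact ⟨hbG, hb.2⟩
          · rcases Nat.lt_or_ge (topJ c.σ) n with hjlt | hjge
            · -- shift
              have happ : App n c .sh := ⟨hev, hne, hjlt⟩
              refine combinator .sh happ (fun b hb => Finset.mem_union_left _ hb) ?_
              have htJ : topJ (doAct c .sh).σ = topJ c.σ + 1 := topJ_concat _ _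
              have htI : topI (doAct c .sh).σ = topJ c.σ := topI_concat _ _
              intro b hb
              have hbG : b ∈ tG := reach_subset_gold tG c hb
              obtain ⟨X, p, q⟩ := b
              have hv := hG.validSpans _ hbG
              simp only [span] at hv
              rw [reach, if_neg (by omega)] at hb
              refine Finset.mem_union_right _ ?_
              rw [reach, if_neg (by rw [sh_stack]; simp; omega)]
              rcases Finset.mem_union.1 hb with hb | hb
              · rw [mem_leftSet, if_pos hev, senc_iff] at hb
                obtain ⟨-, ⟨⟨hp, -, hq⟩, hne'⟩, hpmem⟩ := hb
                have hq' : topJ c.σ < q := by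
                  rcases eq_or_lt_of_le hq with rfl | h'
                  · exfalso
                    have hplt : p < topI c.σ := by
                      rcases eq_or_lt_of_le hp with rfl | h
                      · exact absurd ⟨rfl, rfl⟩ hne'
                      · exact h
                    exact hC ⟨(X, p, topJ c.σ), hbG, rfl, hplt, hpmem⟩
                  · exact h'
                refine Finset.mem_union_left _ ?_
                rw [mem_leftSet, htI, htJ,
                  if_neg (by simp [doAct, Nat.even_add_one, hev])]
                refine ⟨hbG, ⟨by omega, by omega, by omega⟩, ?_⟩
                rw [sh_stack]
                exact List.mem_append_left _ hpmem
              · rw [mem_rightSet] at hb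
                obtain ⟨-, hp⟩ := hb
                rcases eq_or_lt_of_le hp with rfl | hplt
                · refine Finset.mem_union_left _ ?_
                  rw [mem_leftSet, htI, htJ,
                    if_neg (by simp [doAct, Nat.even_add_one, hev])]
                  refine ⟨hbG, ⟨le_refl _, by omega, by omega⟩, ?_⟩
                  rw [sh_stack]
                  exact List.mem_append_left _ (topJ_mem hne)
                · refine Finset.mem_union_right _ ?_
                  rw [mem_rightSet, htJ]
                  exact ⟨hbG, by omega⟩
            · -- topJ = n, not final: combine, reach is empty
              have hjeq : topJ c.σ = n := le_antisymm hjn hjge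
              have hlen3 : 3 ≤ c.σ.length := by
                rcases Nat.lt_or_ge c.σ.length 3 with h | h
                · exact absurd ⟨by omega, hjeq⟩ hfin
                · exact h
              have happ : App n c .comb := ⟨hev, hlen3⟩
              refine combinator .comb happ (fun b hb => Finset.mem_union_left _ hb) ?_
              intro b hb
              exfalso
              have hbG : b ∈ tG := reach_subset_gold tG c hb
              obtain ⟨X, p, q⟩ := b
              have hv := hG.validSpans _ hbG
              simp only [span] at hv
              rw [reach, if_neg (by omega)] at hb
              rcases Finset.mem_union.1 hb with hb | hb
              · rw [mem_leftSet, if_pos hev, senc_iff] at hb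
                obtain ⟨-, ⟨⟨hp, -, hq⟩, hne'⟩, hpmem⟩ := hb
                have hqeq : q = topJ c.σ := by omega
                have hplt : p < topI c.σ := by
                  rcases eq_or_lt_of_le hp with rfl | h
                  · exact absurd ⟨rfl, hqeq.symm⟩ hne'
                  · exact h
                exact hC ⟨(X, p, q), hbG, by simp [span]; omega, hplt, hpmem⟩
              · rw [mem_rightSet] at hb
                omega
    · -- labeling step
      have hlen : 2 ≤ c.σ.length := hoddlen hev
      have hodd : Odd c.z := Nat.not_even_iff_odd.1 hev
      have hIJ : topI c.σ < topJ c.σ := topI_lt_topJ hsort hlen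
      by_cases hX : ∃ X, (X, topI c.σ, topJ c.σ) ∈ tG
      · obtain ⟨X, hXG⟩ := hX
        have happ : App n c (.label X) := ⟨hodd, hlen⟩
        have hmem : (X, topI c.σ, topJ c.σ) ∈ reach tG c :=
          top_mem_reach tG ⟨hne, hhead, hsort, hle, hz, hoddlen⟩ hev hlen hXG
        refine combinator (.label X) happ ?_ ?_
        · intro b hb
          simp only [doAct, Finset.mem_insert] at hb
          rcases hb with rfl | hb
          · exact Finset.mem_union_right _ hmem
          · exact Finset.mem_union_left _ hb
        · intro b hb
          have hbG : b ∈ tG := reach_subset_gold tG c hb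
          obtain ⟨Y, p, q⟩ := b
          rw [reach, if_neg (by omega)] at hb
          rcases Finset.mem_union.1 hb with hb | hb
          · rw [mem_leftSet, if_neg hev, enc_iff] at hb
            obtain ⟨-, ⟨hp, -, hq⟩, hpmem⟩ := hb
            by_cases hsp : p = topI c.σ ∧ q = topJ c.σ
            · -- this is the labeled bracket itself
              have : (Y, p, q) = (X, topI c.σ, topJ c.σ) :=
                hG.distinctSpans _ hbG _ hXG (by simp [span, hsp.1, hsp.2])
              refine Finset.mem_union_left _ ?_
              simp only [doAct, Finset.mem_insert]
              exact Or.inl this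
            · refine Finset.mem_union_right _ ?_
              rw [reach, if_neg (by simp [doAct]; omega)]
              refine Finset.mem_union_left _ ?_
              rw [mem_leftSet, if_pos (by simp [doAct, Nat.even_add_one, hev]),
                senc_iff]
              exact ⟨hbG, ⟨⟨hp, hIJ, hq⟩, fun hcon => hsp ⟨hcon.1.symm, hcon.2.symm⟩⟩,
                hpmem⟩
          · refine Finset.mem_union_right _ ?_
            rw [reach, if_neg (by simp [doAct]; omega)]
            exact Finset.mem_union_right _ (by rw [mem_rightSet] at hb ⊢; exact hb)
      · have hzlt : c.z < 4 * n - 1 := by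
          rw [if_neg hev] at hz
          omega
        have happ : App n c .nolabel := ⟨hodd, hlen, hzlt⟩
        refine combinator .nolabel happ (fun b hb => Finset.mem_union_left _ hb) ?_
        intro b hb
        have hbG : b ∈ tG := reach_subset_gold tG c hb
        obtain ⟨Y, p, q⟩ := b
        rw [reach, if_neg (by omega)] at hb
        refine Finset.mem_union_right _ ?_
        rw [reach, if_neg (by simp [doAct]; omega)]
        rcases Finset.mem_union.1 hb with hb | hb
        · rw [mem_leftSet, if_neg hev, enc_iff] at hb
          obtain ⟨-, ⟨hp, -, hq⟩, hpmem⟩ := hb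
          have hsp : ¬(p = topI c.σ ∧ q = topJ c.σ) := by
            rintro ⟨rfl, rfl⟩
            exact hX ⟨Y, hbG⟩
          refine Finset.mem_union_left _ ?_
          rw [mem_leftSet, if_pos (by simp [doAct, Nat.even_add_one, hev]), senc_iff]
          exact ⟨hbG, ⟨⟨hp, hIJ, hq⟩, fun hcon => hsp ⟨hcon.1.symm, hcon.2.symm⟩⟩, hpmem⟩
        · exact Finset.mem_union_right _ (by rw [mem_rightSet] at hb ⊢; exact hb)

/-! ### F1 arithmetic -/

lemma f1_nonneg (tG t' : Finset (N × ℕ × ℕ)) : 0 ≤ f1 tG t' := by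
  rw [f1]; split
  · exact le_refl 0
  · apply div_nonneg
    · positivity
    · positivity

lemma f1_eq {tG t' : Finset (N × ℕ × ℕ)} (h : t' ∩ tG ≠ ∅) :
    f1 tG t' = 2 * ((t' ∩ tG).card : ℝ) / ((tG.card : ℝ) + (t'.card : ℝ)) := by
  have hk : 0 < (((t' ∩ tG).card : ℕ) : ℝ) := by
    have := Finset.card_pos.2 (Finset.nonempty_iff_ne_empty.2 h)
    exact_mod_cast this
  have hG : 0 < ((tG.card : ℕ) : ℝ) := by
    have h1 := Finset.card_le_card (Finset.inter_subset_right (s₁ := t') (s₂ := tG))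
    have h2 : (0:ℝ) < (t' ∩ tG).card := hk
    exact_mod_cast lt_of_lt_of_le (by exact_mod_cast h2) (by exact_mod_cast h1)
  have hm : 0 < ((t'.card : ℕ) : ℝ) := by
    have h1 := Finset.card_le_card (Finset.inter_subset_left (s₁ := t') (s₂ := tG))
    exact lt_of_lt_of_le hk (by exact_mod_cast h1)
  rw [f1, if_neg h]
  field_simp
  ring

lemma f1_le_f1 (tG t t' r : Finset (N × ℕ × ℕ)) (hr : r ⊆ tG) (htt' : t ⊆ t')
    (hsub : t' ∩ tG ⊆ (t ∩ tG) ∪ r) : f1 tG t' ≤ f1 tG (t ∪ r) := by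
  by_cases h0 : t' ∩ tG = ∅
  · rw [f1, if_pos h0]; exact f1_nonneg _ _
  · have hstar : (t ∪ r) ∩ tG = (t ∩ tG) ∪ r := by
      ext x
      have hxr := @hr x
      simp only [Finset.mem_inter, Finset.mem_union] at *
      tauto
    have hstar2 : (t ∩ tG) ∪ r = (t ∩ tG) ∪ (r \ t) := by
      ext x
      have hxr := @hr x
      simp only [Finset.mem_inter, Finset.mem_union, Finset.mem_sdiff] at *
      tauto
    have hdisj : Disjoint (t ∩ tG) (r \ t) := by
      rw [Finset.disjoint_left]
      intro x hx hx'
      exact (Finset.mem_sdiff.1 hx').2 (Finset.mem_inter.1 hx).1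
    have hdisj2 : Disjoint t (r \ t) := by
      rw [Finset.disjoint_left]
      intro x hx hx'
      exact (Finset.mem_sdiff.1 hx').2 hx
    have h0' : (t ∪ r) ∩ tG ≠ ∅ := by
      rw [hstar]
      intro he
      rcases Finset.nonempty_iff_ne_empty.2 h0 with ⟨x, hx⟩
      have := hsub hx
      rw [he] at this
      simp at this
    -- notation
    set b := (t ∩ tG).card with hb
    set R := (r \ t).card with hR
    set T := t.card with hT
    set G := tG.card with hG
    set k' := (t' ∩ tG).card with hk'
    set m' := t'.card with hm'
    have hk : ((t ∪ r) ∩ tG).card = b + R := by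
      rw [hstar, hstar2, Finset.card_union_of_disjoint hdisj]
    have hm : (t ∪ r).card = T + R := by
      rw [← Finset.union_sdiff_self_eq_union, Finset.card_union_of_disjoint hdisj2]
    have hk'le : k' ≤ b + R := by
      rw [← hk, hstar]
      exact Finset.card_le_card hsub
    have hble : b ≤ k' := Finset.card_le_card
      (Finset.inter_subset_inter_right htt')
    have hbleG : b ≤ G := Finset.card_le_card Finset.inter_subset_right
    have hk'leG : k' ≤ G := Finset.card_le_card Finset.inter_subset_right
    have hk'pos : 1 ≤ k' :=
      Finset.card_pos.2 (Finset.nonempty_iff_ne_empty.2 h0)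
    have hm'ge : T + k' ≤ m' + b := by
      have hsub2 : t ∪ ((t' ∩ tG) \ t) ⊆ t' := by
        intro x hx
        rcases Finset.mem_union.1 hx with hx | hx
        · exact htt' hx
        · exact (Finset.mem_inter.1 (Finset.mem_sdiff.1 hx).1).1
      have hdisj3 : Disjoint t ((t' ∩ tG) \ t) := by
        rw [Finset.disjoint_left]
        intro x hx hx'
        exact (Finset.mem_sdiff.1 hx').2 hx
      have h1 : T + ((t' ∩ tG) \ t).card ≤ m' := by
        rw [← Finset.card_union_of_disjoint hdisj3]
        exact Finset.card_le_card hsub2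
      have h2 : ((t' ∩ tG) \ t).card + b = k' := by
        rw [hb, hk']
        have : (t' ∩ tG) ∩ t = t ∩ tG := by
          ext x
          have hxt := @htt' x
          simp only [Finset.mem_inter] at *
          tauto
        rw [← this]
        exact Finset.card_sdiff_add_card_inter _ _
      omega
    have c1 : (k' : ℝ) ≤ (b:ℝ) + R := by exact_mod_cast hk'le
    have c2 : (b : ℝ) ≤ (k' : ℝ) := by exact_mod_cast hble
    have c3 : (b : ℝ) ≤ (G : ℝ) := by exact_mod_cast hbleG
    have c4 : (1 : ℝ) ≤ (k' : ℝ) := by exact_mod_cast hk'pos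
    have c5 : (T : ℝ) + (k' : ℝ) ≤ (m':ℝ) + (b : ℝ) := by exact_mod_cast hm'ge
    have c6 : (0 : ℝ) ≤ (T : ℝ) := Nat.cast_nonneg _
    have c7 : (0 : ℝ) ≤ (R : ℝ) := Nat.cast_nonneg _
    have c8 : (0:ℝ) ≤ (m':ℝ) := Nat.cast_nonneg _
    have c9 : (1:ℝ) ≤ (G:ℝ) := by exact_mod_cast (le_trans hk'pos hk'leG)
    rw [f1_eq h0, f1_eq h0', hk, hm]
    push_cast
    rw [div_le_div_iff₀ (by linarith) (by linarith)]
    nlinarith [mul_nonneg (by linarith : (0:ℝ) ≤ (b:ℝ) + R - k')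
        (by linarith : (0:ℝ) ≤ (G:ℝ) + T - b),
      mul_nonneg (by linarith : (0:ℝ) ≤ (b:ℝ) + R)
        (by linarith : (0:ℝ) ≤ (m':ℝ) + b - T - k')]

/-- Theorem 1 (optimality of `t*`): for every valid configuration `c`,
`F1(t*(c))` attains the maximum of `F1` over all trees reachable from `c`,
i.e. `F1(t*(c)) = F1(c) = max_{t' ∈ D(c)} F1(t')`. -/
theorem tstar_optimal (n : ℕ) (hn : 1 ≤ n) (tG : Finset (N × ℕ × ℕ))
    (hG : IsGold n tG) (c : Config N) (hc : Valid n c) :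
    IsGreatest (f1 tG '' Dset n c) (f1 tG (tstar tG c)) ∧
      f1 tG (tstar tG c) = configF1 n tG c := by
  have hInv := valid_inv hc
  obtain ⟨cf, hr, hfin, ht⟩ := oracle_run hn tG hG (4 * n) c hInv (by omega)
  have hmem : f1 tG (tstar tG c) ∈ f1 tG '' Dset n c :=
    ⟨tstar tG c, ⟨cf, hr, hfin, by rw [ht]; rfl⟩, rfl⟩
  have hub : ∀ y ∈ f1 tG '' Dset n c, y ≤ f1 tG (tstar tG c) := by
    rintro y ⟨t', ⟨c', hr', hfin', rfl⟩, rfl⟩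
    apply f1_le_f1 tG c.t c'.t (reach tG c) (reach_subset_gold tG c)
      (reaches_t_subset hr')
    intro x hx
    exact reaches_decreasing tG hInv hr' (Finset.mem_union_left _ hx)
  have hgreat : IsGreatest (f1 tG '' Dset n c) (f1 tG (tstar tG c)) := ⟨hmem, hub⟩
  exact ⟨hgreat, hgreat.csSup_eq.symm⟩

end SpanParser
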